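/- For positive reals μ and κ and any real λ, one has |λ| − λ²·√((λ² + μ² + κ²)/((λ² + μ²)(λ² + κ²))) < μκ/√(μ² + κ²), with the bound μκ/√(μ²+κ²) not attained for any λ. -/

import Mathlib

theorem smooth_abs_approx_strict (μ κ : ℝ) (hμ : 0 < μ) (hκ : 0 < κ) :
    ∀ lam : ℝ,
      |lam| - lam ^ 2 *
          Real.sqrt ((lam ^ 2 + μ ^ 2 + κ ^ 2) / ((lam ^ 2 + μ ^ 2) * (lam ^ 2 + κ ^ 2))) <
        μ * κ / Real.sqrt (μ ^ 2 + κ ^ 2) := by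
  intro lam
  have hm : (0:ℝ) < μ^2 := by positivity
  have hk : (0:ℝ) < κ^2 := by positivity
  set a := lam ^ 2 with ha
  have ha0 : (0:ℝ) ≤ a := sq_nonneg lam
  have hmk : (0:ℝ) < μ^2 + κ^2 := by positivity
  have hsq : (0:ℝ) < Real.sqrt (μ^2+κ^2) := Real.sqrt_pos.mpr hmk
  have hR0 : 0 < μ * κ / Real.sqrt (μ^2+κ^2) := by positivity
  set R := μ * κ / Real.sqrt (μ^2+κ^2) with hR
  have hR2 : R^2 * (μ^2+κ^2) = μ^2*κ^2 := by
    rw [hR, div_pow, Real.sq_sqrt hmk.le]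
    field_simp
  have hD : (0:ℝ) < (a+μ^2)*(a+κ^2) := by positivity
  have hE0 : (0:ℝ) ≤ (a + μ^2 + κ^2) / ((a+μ^2)*(a+κ^2)) := by positivity
  have hterm : 0 ≤ a * Real.sqrt ((a + μ^2 + κ^2) / ((a+μ^2)*(a+κ^2))) := by positivity
  rcases lt_or_ge (|lam|) R with h | h
  · have : |lam| = Real.sqrt a := by rw [ha, Real.sqrt_sq_eq_abs]
    linarith
  · have habs : |lam|^2 = a := by rw [sq_abs]
    have ha' : R^2 ≤ a := by nlinarith [abs_nonneg lam]
    have haR : 0 < a := lt_of_lt_of_le (by positivity) ha'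
    set u := R * |lam| * (μ^2+κ^2) with hu
    have hu0 : 0 ≤ u := by positivity
    have hu2 : u^2 = (μ^2*κ^2) * a * (μ^2+κ^2) := by
      rw [hu]
      linear_combination (R^2*(μ^2+κ^2)^2) * habs + (a*(μ^2+κ^2)) * hR2
    have hu_ge : μ^2*κ^2 ≤ u := by
      nlinarith [hu2, hR2, ha', hu0, hm, hk, hmk, sq_nonneg (u - μ^2*κ^2)]
    have hexp : (|lam| - R)^2 * (μ^2+κ^2) = a*(μ^2+κ^2) - 2*u + μ^2*κ^2 := by
      linear_combination (μ^2+κ^2)*habs + hR2 + 2*hu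
    have hkey : (a*(μ^2+κ^2) - 2*u + μ^2*κ^2) * ((a+μ^2)*(a+κ^2)) <
        a^2*(a+μ^2+κ^2)*(μ^2+κ^2) := by
      nlinarith [mul_nonneg (sub_nonneg.2 hu_ge) (sq_nonneg a),
        mul_nonneg (mul_nonneg (sub_nonneg.2 hu_ge) hmk.le) ha0,
        mul_nonneg (sub_nonneg.2 hu_ge) (mul_pos hm hk).le,
        mul_pos (mul_pos hm hk) (mul_pos haR haR)]
    have hkey2 : (|lam| - R)^2 * ((a+μ^2)*(a+κ^2)) < a^2*(a+μ^2+κ^2) := by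
      have h3 : (|lam| - R)^2 * ((a+μ^2)*(a+κ^2)) * (μ^2+κ^2) <
          a^2*(a+μ^2+κ^2) * (μ^2+κ^2) := by
        calc (|lam| - R)^2 * ((a+μ^2)*(a+κ^2)) * (μ^2+κ^2)
            = (a*(μ^2+κ^2) - 2*u + μ^2*κ^2) * ((a+μ^2)*(a+κ^2)) := by
              linear_combination ((a+μ^2)*(a+κ^2))*hexp
          _ < a^2*(a+μ^2+κ^2)*(μ^2+κ^2) := hkey
      exact lt_of_mul_lt_mul_right h3 hmk.le
    have h1 : (|lam| - R)^2 < a^2 * ((a + μ^2 + κ^2) / ((a+μ^2)*(a+κ^2))) := by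
      rw [show a^2 * ((a + μ^2 + κ^2) / ((a+μ^2)*(a+κ^2))) =
        a^2*(a+μ^2+κ^2) / ((a+μ^2)*(a+κ^2)) from by ring, lt_div_iff₀ hD]
      exact hkey2
    have h2 : |lam| - R < a * Real.sqrt ((a + μ^2 + κ^2) / ((a+μ^2)*(a+κ^2))) := by
      have hs := Real.sqrt_lt_sqrt (sq_nonneg _) h1
      rwa [Real.sqrt_sq (sub_nonneg.2 h), Real.sqrt_mul (sq_nonneg a),
        Real.sqrt_sq ha0] at hs
    linarith
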